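/- Induction step for the alternating-weight determinant identity: Let T be a tree with t \ge 2 vertices in a signed graph with incidence matrix conventions as above, let M be the (t \times t) submatrix with rows indexed by E(T) and the weight row w, and columns indexed by V(T). Let v_1 be a leaf of T with incident edge e = v_1 v_2. Define T' := T - v_1 and w'(v_2) := w(v_2) + \sigma(e) w(v_1), w'(v) := w(v) otherwise, and let M' be the corresponding (t-1) \times (t-1) matrix for T' and w'. Then |det(M)| = |det(M')|. -/

import Mathlib

lemma succAbove_val' {n : ℕ} (p : Fin (n+1)) (i : Fin n) :
    (p.succAbove i).val = if i.val < p.val then i.val else i.val + 1 := by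
  rw [Fin.succAbove]
  split_ifs with h h' h' <;> simp_all [Fin.lt_def]


/-- The square matrix `M` for a tree with `k+1` edges and `k+2` vertices: the first
`k+1` rows are the incidence rows `A`, the last row is the weight row `w`. -/
def treeMatrix {k : ℕ} (A : Matrix (Fin (k + 1)) (Fin (k + 2)) ℤ)
    (w : Fin (k + 2) → ℤ) : Matrix (Fin (k + 2)) (Fin (k + 2)) ℤ :=
  Matrix.of fun i j => if h : (i : ℕ) < k + 1 then A ⟨i, h⟩ j else w j

/-- The reduced matrix `M'` obtained by deleting the row of edge `e` and the column of
the leaf `v₁`, and replacing the weight row by `w'`. -/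
def reducedTreeMatrix {k : ℕ} (A : Matrix (Fin (k + 1)) (Fin (k + 2)) ℤ)
    (w' : Fin (k + 2) → ℤ) (e : Fin (k + 1)) (v1 : Fin (k + 2)) :
    Matrix (Fin (k + 1)) (Fin (k + 1)) ℤ :=
  Matrix.of fun i j =>
    if h : (i : ℕ) < k then A (e.succAbove ⟨i, h⟩) (v1.succAbove j)
    else w' (v1.succAbove j)

/-- Induction step for the alternating-weight determinant identity: deleting a leaf
`v₁` with incident edge `e = v₁v₂` and folding its weight into `v₂` via
`w'(v₂) = w(v₂) + σ(e) w(v₁)` preserves the determinant up to sign. -/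
theorem leaf_deletion_det {k : ℕ}
    (A : Matrix (Fin (k + 1)) (Fin (k + 2)) ℤ) (w : Fin (k + 2) → ℤ)
    (e : Fin (k + 1)) (v1 v2 : Fin (k + 2)) (hne : v1 ≠ v2) (σe : ℤ)
    (hv1 : A e v1 = 1 ∨ A e v1 = -1)
    (hv2 : A e v2 = 1 ∨ A e v2 = -1)
    (hσ : A e v1 * A e v2 = -σe)
    (hrow : ∀ x, x ≠ v1 → x ≠ v2 → A e x = 0)
    (hleaf : ∀ f, f ≠ e → A f v1 = 0) :
    ((treeMatrix A w).det).natAbs =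
      ((reducedTreeMatrix A
        (fun x => if x = v2 then w v2 + σe * w v1 else w x) e v1).det).natAbs := by
  set M := treeMatrix A w with hM
  have hsq : A e v1 * A e v1 = 1 := by rcases hv1 with h | h <;> rw [h] <;> ring
  set c : ℤ := -(A e v1 * w v1) with hc
  set N := M.updateRow (Fin.last (k+1)) (M (Fin.last (k+1)) + c • M e.castSucc) with hN
  have hlastne : Fin.last (k+1) ≠ e.castSucc := (Fin.castSucc_lt_last e).ne'
  have hdet : N.det = M.det := Matrix.det_updateRow_add_smul_self M hlastne c
  -- entries of N
  have hNlast : ∀ j, N (Fin.last (k+1)) j = w j + c * A e j := by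
    intro j
    simp only [hN, Matrix.updateRow_self, Pi.add_apply, Pi.smul_apply, smul_eq_mul,
      hM, treeMatrix, Matrix.of_apply]
    rw [dif_neg (by simp), dif_pos (by simpa using e.isLt)]
    rfl
  have hNother : ∀ i (h : (i : Fin (k+2)).val < k + 1) j, N i j = A ⟨i.val, h⟩ j := by
    intro i h j
    have hi : i ≠ Fin.last (k+1) := by
      intro hh; rw [hh] at h; simp at h
    simp only [hN, Matrix.updateRow_ne hi, hM, treeMatrix, Matrix.of_apply, dif_pos h]
  -- column v1 of N vanishes except at row e.castSucc
  have hcol : ∀ i, i ≠ e.castSucc → N i v1 = 0 := by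
    intro i hi
    by_cases h : i.val < k + 1
    · rw [hNother i h v1]
      apply hleaf
      intro hf
      apply hi
      apply Fin.ext
      simp [← hf]
    · have : i = Fin.last (k+1) := by
        apply Fin.ext
        have := i.isLt; simp [Fin.last]; omega
      rw [this, hNlast, hc]
      have h2 : A e v1 ^ 2 = 1 := by rw [sq, hsq]
      ring_nf
      rw [h2]; ring
  have hdiag : N e.castSucc v1 = A e v1 := by
    rw [hNother e.castSucc (by have := e.isLt; simp; omega) v1]
    rfl
  -- cofactor expansion along column v1
  rw [← hdet, Matrix.det_succ_column N v1]
  rw [Finset.sum_eq_single e.castSucc]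
  · -- single term
    rw [hdiag]
    have hsub : N.submatrix (e.castSucc.succAbove) (v1.succAbove)
        = reducedTreeMatrix A (fun x => if x = v2 then w v2 + σe * w v1 else w x) e v1 := by
      ext i j
      simp only [Matrix.submatrix_apply, reducedTreeMatrix, Matrix.of_apply]
      by_cases h : i.val < k
      · rw [dif_pos h]
        have hval : (e.castSucc.succAbove i).val < k + 1 := by
          rw [succAbove_val']; split <;> omega
        rw [hNother _ hval]
        congr 1
        apply Fin.ext
        rw [succAbove_val', succAbove_val']
        simp [Fin.castSucc]
      · rw [dif_neg h]
        have hik : i.val = k := by have := i.isLt; omega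
        have hlast : e.castSucc.succAbove i = Fin.last (k+1) := by
          apply Fin.ext
          rw [succAbove_val']
          have he := e.isLt
          simp [Fin.last, Fin.castSucc, hik]
          omega
        rw [hlast, hNlast]
        have hnv1 : v1.succAbove j ≠ v1 := Fin.succAbove_ne v1 j
        by_cases hv : v1.succAbove j = v2
        · rw [hv, if_pos rfl, hc]
          linear_combination (-(w v1)) * hσ
        · rw [if_neg hv, hrow _ hnv1 hv, hc]
          ring
    rw [hsub]
    rcases hv1 with h | h <;> rw [h] <;>
      simp [Int.natAbs_mul, Int.natAbs_pow]
  · intro i _ hi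
    rw [hcol i hi]; ring
  · intro h; simp at h
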